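/- arXiv:2504.13809 — 4 statements merged into one kernel-verified Lean document; each statement's English description precedes it below -/
import Mathlib

section
/- Let A be a real m×n matrix and let 1 ≤ k < min(m, n). Let σ_{k+1}(A) := inf{‖A − B‖₂ : B is a real m×n matrix with rank B ≤ k} denote the (k+1)-st largest singular value of A. Then there exist a set J of k column indices of A, a real k×n matrix R with all entries of absolute value at most 1, and an n×n permutation matrix P such that ‖A − A_{:,J} R P‖₂ ≤ σ_{k+1}(A) · √(1 + k(n − k)), where A_{:,J} denotes the m×k submatrix of A consisting of the columns indexed by J. -/
/-- Spectral norm (ℓ²-operator norm) of a real matrix. -/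
noncomputable def specNorm {m n : ℕ} (A : Matrix (Fin m) (Fin n) ℝ) : ℝ :=
  ‖LinearMap.toContinuousLinearMap (Matrix.toEuclideanLin A)‖

open Matrix Finset Module Submodule

section SpecNormLemmas
open scoped Matrix.Norms.L2Operator

lemma specNorm_eq_norm {m n : ℕ} (A : Matrix (Fin m) (Fin n) ℝ) : specNorm A = ‖A‖ := rfl

lemma specNorm_nonneg {m n : ℕ} (A : Matrix (Fin m) (Fin n) ℝ) : 0 ≤ specNorm A := by
  rw [specNorm_eq_norm]; exact norm_nonneg _

lemma specNorm_mul_le {m p n : ℕ} (A : Matrix (Fin m) (Fin p) ℝ) (B : Matrix (Fin p) (Fin n) ℝ) :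
    specNorm (A * B) ≤ specNorm A * specNorm B := by
  simpa [specNorm_eq_norm] using Matrix.l2_opNorm_mul A B

end SpecNormLemmas

lemma specNorm_le_bound {m n : ℕ} (M : Matrix (Fin m) (Fin n) ℝ) {c : ℝ} (hc : 0 ≤ c)
    (h : ∀ v : EuclideanSpace ℝ (Fin n), ‖(Matrix.toEuclideanLin M) v‖ ≤ c * ‖v‖) :
    specNorm M ≤ c :=
  ContinuousLinearMap.opNorm_le_bound _ hc (fun v => h v)

lemma specNorm_continuous {m n : ℕ} : Continuous (specNorm : Matrix (Fin m) (Fin n) ℝ → ℝ) := by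
  have h := LinearMap.continuous_of_finiteDimensional
    ((Matrix.toEuclideanLin.trans LinearMap.toContinuousLinearMap).toLinearMap :
      Matrix (Fin m) (Fin n) ℝ →ₗ[ℝ] (EuclideanSpace ℝ (Fin n) →L[ℝ] EuclideanSpace ℝ (Fin m)))
  exact h.norm

lemma exists_det_ne_zero {k n : ℕ} (X : Matrix (Fin k) (Fin n) ℝ)
    (hX : LinearIndependent ℝ (fun i => X i)) :
    ∃ J : Fin k → Fin n, (X.submatrix id J).det ≠ 0 := by
  classical
  have hrank : X.rank = k := by
    simpa using (hX.rank_matrix (M := X))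
  have htop : Submodule.span ℝ (Set.range Xᵀ) = ⊤ := by
    have h1 : LinearMap.range X.mulVecLin = Submodule.span ℝ (Set.range Xᵀ) :=
      Matrix.range_mulVecLin X
    refine Submodule.eq_top_of_finrank_eq ?_
    rw [← h1]
    have h2 : finrank ℝ (Fin k → ℝ) = k := by simp
    rw [h2]
    exact hrank
  obtain ⟨b, hbsub, hbspan, hbli⟩ := exists_linearIndependent ℝ (Set.range Xᵀ)
  rw [htop] at hbspan
  have hbfin : b.Finite := Set.Finite.subset (Set.finite_range _) hbsub
  haveI : Fintype b := hbfin.fintype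
  have hcard : Fintype.card b = k := by
    have := linearIndependent_iff_card_eq_finrank_span.mp hbli
    rw [Subtype.range_coe] at this
    simp only [Set.finrank] at this
    rw [hbspan] at this
    simpa using this
  let e : Fin k ≃ b := (Fintype.equivFinOfCardEq hcard).symm
  have hJex : ∀ c : Fin k, ∃ j : Fin n, Xᵀ j = (e c : Fin k → ℝ) :=
    fun c => hbsub (e c).2
  choose J hJ using hJex
  refine ⟨J, ?_⟩
  intro hdet
  obtain ⟨v, hv0, hvm⟩ := (Matrix.exists_mulVec_eq_zero_iff).mpr hdet
  have ligc : LinearIndependent ℝ (fun c : Fin k => (e c : Fin k → ℝ)) :=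
    hbli.comp e e.injective
  have hsum : ∑ c, v c • (e c : Fin k → ℝ) = 0 := by
    funext i
    rw [Finset.sum_apply]
    have : ∀ c, (v c • (e c : Fin k → ℝ)) i = X i (J c) * v c := by
      intro c
      rw [← hJ c]
      simp [Matrix.transpose_apply, mul_comm]
    rw [Finset.sum_congr rfl (fun c _ => this c)]
    have := congrFun hvm i
    simpa [Matrix.mulVec, dotProduct] using this
  have := Fintype.linearIndependent_iff.mp ligc v hsum
  exact hv0 (funext fun c => this c)

lemma exists_factorization {m n k : ℕ} (B : Matrix (Fin m) (Fin n) ℝ) (hkn : k ≤ n)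
    (hB : B.rank ≤ k) :
    ∃ (C : Matrix (Fin m) (Fin k) ℝ) (X : Matrix (Fin k) (Fin n) ℝ),
      LinearIndependent ℝ (fun i => X i) ∧ B = C * X := by
  classical
  obtain ⟨b, hbsub, hbspan, hbli⟩ := exists_linearIndependent ℝ (Set.range (fun i => B i))
  have hbfin : b.Finite := Set.Finite.subset (Set.finite_range _) hbsub
  haveI : Fintype b := hbfin.fintype
  set r := Fintype.card b with hr
  have hrk : r ≤ k := by
    have h1 := linearIndependent_iff_card_eq_finrank_span.mp hbli
    rw [Subtype.range_coe] at h1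
    have h2 : Set.finrank ℝ b = B.rank := by
      simp only [Set.finrank]
      rw [hbspan]
      exact (B.rank_eq_finrank_span_row).symm
    exact le_trans (le_of_eq (h1.trans h2)) hB
  -- initial family
  let v0 : Fin r → (Fin n → ℝ) := fun i => ((Fintype.equivFin b).symm i : Fin n → ℝ)
  have liv0 : LinearIndependent ℝ v0 := hbli.comp _ (Fintype.equivFin b).symm.injective
  have hbrange : b ⊆ Set.range v0 := by
    intro x hx
    exact ⟨Fintype.equivFin b ⟨x, hx⟩, by simp [v0]⟩
  have key : ∀ j, r ≤ j → j ≤ n → ∃ X : Fin j → (Fin n → ℝ),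
      LinearIndependent ℝ X ∧ b ⊆ Set.range X := by
    intro j hrj
    induction j, hrj using Nat.le_induction with
    | base => intro _; exact ⟨v0, liv0, hbrange⟩
    | succ j hj ih =>
      intro hjn
      obtain ⟨X, hXli, hXb⟩ := ih (by omega)
      obtain ⟨x, hx⟩ := exists_linearIndependent_snoc_of_lt_finrank hXli
        (by simp only [finrank_pi]; simpa using by omega)
      refine ⟨Fin.snoc X x, hx, hXb.trans ?_⟩
      rintro y ⟨i, rfl⟩
      exact ⟨i.castSucc, by simp⟩
  obtain ⟨X, hXli, hXb⟩ := key k hrk hkn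
  have hmem : ∀ i, B i ∈ span ℝ (Set.range X) := by
    intro i
    have h1 : B i ∈ span ℝ (Set.range fun i => B i) :=
      subset_span (Set.mem_range_self i)
    rw [← hbspan] at h1
    exact span_mono hXb h1
  let bas : Basis (Fin k) ℝ (span ℝ (Set.range X)) := Basis.span hXli
  let C : Matrix (Fin m) (Fin k) ℝ := Matrix.of fun i j => bas.repr ⟨B i, hmem i⟩ j
  refine ⟨C, Matrix.of X, hXli, ?_⟩
  ext i a
  have h4 := bas.sum_repr ⟨B i, hmem i⟩
  have h5 := congrArg (Subtype.val) h4
  have h6 : (∑ j, bas.repr ⟨B i, hmem i⟩ j • (bas j : Fin n → ℝ)) = B i := by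
    calc ∑ j, bas.repr ⟨B i, hmem i⟩ j • (bas j : Fin n → ℝ)
        = ((∑ j, bas.repr ⟨B i, hmem i⟩ j • bas j : span ℝ (Set.range X)) : Fin n → ℝ) := by
          simp only [Submodule.coe_sum, Submodule.coe_smul]
      _ = B i := h5
  have h7 := congrFun h6 a
  rw [Finset.sum_apply] at h7
  simp only [Matrix.mul_apply, Matrix.of_apply, C]
  rw [← h7]
  refine Finset.sum_congr rfl fun j _ => ?_
  have : (bas j : Fin n → ℝ) = X j := congrArg Subtype.val (Basis.span_apply hXli j)
  rw [this]
  simp [mul_comm]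

lemma cramer_entry_bound {k n : ℕ} (X : Matrix (Fin k) (Fin n) ℝ) (J : Fin k → Fin n)
    (hmax : ∀ J' : Fin k → Fin n, |(X.submatrix id J').det| ≤ |(X.submatrix id J).det|)
    (hdet : (X.submatrix id J).det ≠ 0) :
    ∀ i j, |((X.submatrix id J)⁻¹ * X) i j| ≤ 1 := by
  intro i j
  set A := X.submatrix id J with hA
  have h1 : (A⁻¹ * X) i j = (A⁻¹ *ᵥ (fun l => X l j)) i := by
    simp [Matrix.mul_apply, Matrix.mulVec, dotProduct]
  have h2 : A⁻¹ *ᵥ (fun l => X l j) = (A.det)⁻¹ • cramer A (fun l => X l j) := by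
    rw [Matrix.inv_def, Matrix.smul_mulVec, ← cramer_eq_adjugate_mulVec,
      Ring.inverse_eq_inv']
  have h3 : A.updateCol i (fun l => X l j) = X.submatrix id (Function.update J i j) := by
    ext r c
    rw [Matrix.updateCol_apply]
    by_cases hc : c = i <;> simp [hc, Function.update, hA]
  rw [h1, h2]
  simp only [Pi.smul_apply, smul_eq_mul, cramer_apply, h3]
  rw [abs_mul, abs_inv]
  rw [inv_mul_le_iff₀ (abs_pos.mpr hdet), mul_one]
  exact hmax _

lemma M_bound {k n : ℕ} (hkn : k ≤ n) (J₀ : Fin k → Fin n) (hJinj : Function.Injective J₀)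
    (R : Matrix (Fin k) (Fin n) ℝ) (hR : ∀ i j, |R i j| ≤ 1)
    (hRid : ∀ i c, R i (J₀ c) = if i = c then 1 else 0) :
    specNorm ((1 : Matrix (Fin n) (Fin n) ℝ) -
        ((1 : Matrix (Fin n) (Fin n) ℝ).submatrix id J₀) * R) ≤
      Real.sqrt (1 + (k : ℝ) * ((n : ℝ) - (k : ℝ))) := by
  classical
  set S := (1 : Matrix (Fin n) (Fin n) ℝ).submatrix id J₀ with hS
  set M := (1 : Matrix (Fin n) (Fin n) ℝ) - S * R with hM
  have hkr : (k:ℝ) ≤ (n:ℝ) := by exact_mod_cast hkn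
  have hconst : (0:ℝ) ≤ 1 + (k : ℝ) * ((n : ℝ) - (k : ℝ)) := by nlinarith
  apply specNorm_le_bound _ (Real.sqrt_nonneg _)
  intro v
  set w : Fin n → ℝ := (WithLp.equiv 2 (Fin n → ℝ)) v with hw
  have hlin : (Matrix.toEuclideanLin M) v = (WithLp.equiv 2 (Fin n → ℝ)).symm (M *ᵥ w) :=
    Matrix.toEuclideanLin_apply M v
  set img : Finset (Fin n) := Finset.image J₀ Finset.univ with himg
  have hcardimg : img.card = k := by
    rw [himg, Finset.card_image_of_injective _ hJinj, Finset.card_univ, Fintype.card_fin]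
  have hcardc : (imgᶜ : Finset (Fin n)).card = n - k := by
    rw [Finset.card_compl, hcardimg, Fintype.card_fin]
  set t : Fin k → ℝ := fun i => ∑ j ∈ imgᶜ, R i j * w j with ht
  -- S *ᵥ u computations
  have hSv : ∀ (u : Fin k → ℝ) (i : Fin k), (S *ᵥ u) (J₀ i) = u i := by
    intro u i
    simp only [hS, Matrix.mulVec, dotProduct, Matrix.submatrix_apply, id_eq,
      Matrix.one_apply, hJinj.eq_iff]
    simp
  have hSv0 : ∀ (u : Fin k → ℝ) (a : Fin n), a ∉ img → (S *ᵥ u) a = 0 := by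
    intro u a ha
    have : ∀ c : Fin k, a ≠ J₀ c := by
      intro c hc
      exact ha (by rw [himg, hc]; exact Finset.mem_image_of_mem _ (Finset.mem_univ c))
    simp only [hS, Matrix.mulVec, dotProduct, Matrix.submatrix_apply, id_eq,
      Matrix.one_apply]
    rw [Finset.sum_eq_zero]
    intro c _
    simp [this c]
  have hRw : ∀ i : Fin k, (R *ᵥ w) i = w (J₀ i) + t i := by
    intro i
    have hsplit : (R *ᵥ w) i = ∑ j ∈ img, R i j * w j + ∑ j ∈ imgᶜ, R i j * w j := by
      simp only [Matrix.mulVec, dotProduct]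
      rw [Finset.sum_add_sum_compl]
    have himgsum : ∑ j ∈ img, R i j * w j = w (J₀ i) := by
      rw [himg, Finset.sum_image (fun a _ b _ h => hJinj h)]
      have : ∀ c : Fin k, R i (J₀ c) * w (J₀ c) = (if i = c then w (J₀ i) else 0) := by
        intro c
        rw [hRid]
        by_cases h : i = c <;> simp [h]
      rw [Finset.sum_congr rfl (fun c _ => this c)]
      simp
    rw [hsplit, himgsum, ht]
  have hMv : ∀ a, (M *ᵥ w) a = w a - (S *ᵥ (R *ᵥ w)) a := by
    intro a
    rw [hM, Matrix.sub_mulVec, ← Matrix.mulVec_mulVec]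
    simp [Matrix.one_mulVec]
  have claim1 : ∀ i : Fin k, (M *ᵥ w) (J₀ i) = - t i := by
    intro i
    rw [hMv, hSv, hRw]; ring
  have claim2 : ∀ a, a ∉ img → (M *ᵥ w) a = w a := by
    intro a ha
    rw [hMv, hSv0 _ _ ha, sub_zero]
  -- sum of squares
  have hsumsq : ∑ a, ((M *ᵥ w) a)^2 = ∑ i, (t i)^2 + ∑ a ∈ imgᶜ, (w a)^2 := by
    rw [← Finset.sum_add_sum_compl img]
    congr 1
    · rw [himg, Finset.sum_image (fun a _ b _ h => hJinj h)]
      refine Finset.sum_congr rfl fun i _ => ?_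
      rw [show (M *ᵥ w) (J₀ i) = - t i from claim1 i]
      ring
    · refine Finset.sum_congr rfl fun a ha => ?_
      rw [claim2 a (by simpa using ha)]
  set W2 := ∑ a ∈ imgᶜ, (w a)^2 with hW2
  have hW2nonneg : 0 ≤ W2 := Finset.sum_nonneg fun a _ => sq_nonneg _
  have hCS : ∀ i : Fin k, (t i)^2 ≤ ((n : ℝ) - k) * W2 := by
    intro i
    have h1 := Finset.sum_mul_sq_le_sq_mul_sq imgᶜ (fun j => R i j) (fun j => w j)
    have h2 : ∑ j ∈ imgᶜ, (R i j)^2 ≤ ((n:ℝ) - k) := by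
      have hle : ∀ j ∈ imgᶜ, (R i j)^2 ≤ 1 := by
        intro j _
        have := hR i j
        nlinarith [abs_nonneg (R i j), sq_abs (R i j)]
      calc ∑ j ∈ imgᶜ, (R i j)^2 ≤ ∑ _j ∈ imgᶜ, (1:ℝ) := Finset.sum_le_sum hle
        _ = (imgᶜ.card : ℝ) := by simp
        _ = (n:ℝ) - k := by rw [hcardc, Nat.cast_sub hkn]
    exact le_trans h1 (mul_le_mul_of_nonneg_right h2 hW2nonneg)
  have hmain : ∑ a, ((M *ᵥ w) a)^2 ≤ (1 + (k:ℝ) * ((n:ℝ) - k)) * ∑ j, (w j)^2 := by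
    have h3 : ∑ i, (t i)^2 ≤ (k:ℝ) * (((n:ℝ) - k) * W2) := by
      calc ∑ i, (t i)^2 ≤ ∑ _i : Fin k, ((n:ℝ) - k) * W2 := Finset.sum_le_sum fun i _ => hCS i
        _ = (k:ℝ) * (((n:ℝ) - k) * W2) := by simp [mul_comm]
    have h4 : W2 ≤ ∑ j, (w j)^2 := by
      rw [hW2]
      exact Finset.sum_le_sum_of_subset_of_nonneg (Finset.subset_univ _)
        (fun j _ _ => sq_nonneg _)
    have h5 : (0:ℝ) ≤ (k:ℝ) * ((n:ℝ) - k) := by nlinarith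
    calc ∑ a, ((M *ᵥ w) a)^2 = ∑ i, (t i)^2 + W2 := hsumsq
      _ ≤ (k:ℝ) * (((n:ℝ) - k) * W2) + W2 := by linarith
      _ = (1 + (k:ℝ) * ((n:ℝ) - k)) * W2 := by ring
      _ ≤ (1 + (k:ℝ) * ((n:ℝ) - k)) * ∑ j, (w j)^2 := by
          apply mul_le_mul_of_nonneg_left h4 (by linarith)
  -- translate to norms
  have hnorm1 : ‖(Matrix.toEuclideanLin M) v‖ = Real.sqrt (∑ a, ((M *ᵥ w) a)^2) := by
    rw [hlin, EuclideanSpace.norm_eq]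
    congr 1
    refine Finset.sum_congr rfl fun a _ => ?_
    simp [Real.norm_eq_abs, sq_abs]
  have hnorm2 : ‖v‖ = Real.sqrt (∑ j, (w j)^2) := by
    rw [EuclideanSpace.norm_eq]
    congr 1
    refine Finset.sum_congr rfl fun j _ => ?_
    simp [Real.norm_eq_abs, sq_abs, hw]
  rw [hnorm1, hnorm2, ← Real.sqrt_mul hconst]
  exact Real.sqrt_le_sqrt hmain

lemma core {m n k : ℕ} (A B : Matrix (Fin m) (Fin n) ℝ) (hkn : k < n) (hB : B.rank ≤ k) :
    ∃ (J : Fin k → Fin n) (R : Matrix (Fin k) (Fin n) ℝ),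
      Function.Injective J ∧ (∀ i j, |R i j| ≤ 1) ∧
      specNorm (A - A.submatrix id J * R) ≤
        specNorm (A - B) * Real.sqrt (1 + (k:ℝ) * ((n:ℝ) - (k:ℝ))) := by
  classical
  haveI : NeZero n := ⟨by omega⟩
  obtain ⟨C, X, hXli, hBCX⟩ := exists_factorization B hkn.le hB
  obtain ⟨J₀, hmax⟩ := Finite.exists_max (fun J : Fin k → Fin n => |(X.submatrix id J).det|)
  have hdetne : (X.submatrix id J₀).det ≠ 0 := by
    obtain ⟨J1, hJ1⟩ := exists_det_ne_zero X hXli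
    have := hmax J1
    intro h
    rw [h, abs_zero] at this
    exact hJ1 (abs_eq_zero.mp (le_antisymm this (abs_nonneg _)))
  have hJinj : Function.Injective J₀ := by
    intro a b hab
    by_contra hne
    apply hdetne
    exact Matrix.det_zero_of_column_eq hne (fun r => by simp [hab])
  set Xs := X.submatrix id J₀ with hXs
  have hunit : IsUnit Xs.det := isUnit_iff_ne_zero.mpr hdetne
  set R := Xs⁻¹ * X with hR
  have hRbound : ∀ i j, |R i j| ≤ 1 := cramer_entry_bound X J₀ (fun J' => hmax J') hdetne
  have hRid : ∀ i c, R i (J₀ c) = if i = c then 1 else 0 := by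
    intro i c
    have h1 : R i (J₀ c) = (Xs⁻¹ * Xs) i c := by
      simp [hR, hXs, Matrix.mul_apply, Matrix.submatrix_apply]
    rw [h1, Matrix.nonsing_inv_mul _ hunit, Matrix.one_apply]
  set S := (1 : Matrix (Fin n) (Fin n) ℝ).submatrix id J₀ with hS
  have hsel : ∀ {p : ℕ} (M : Matrix (Fin p) (Fin n) ℝ), M * S = M.submatrix id J₀ := by
    intro p M
    ext a c
    simp only [Matrix.mul_apply, hS, Matrix.submatrix_apply, id_eq, Matrix.one_apply]
    simp [mul_ite]
  have hXS : X * S = Xs := hsel X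
  have hBSR : B * S * R = B := by
    rw [hBCX, Matrix.mul_assoc C X S, hXS, hR, Matrix.mul_assoc C Xs _]
    rw [← Matrix.mul_assoc Xs _ X, Matrix.mul_nonsing_inv _ hunit, Matrix.one_mul]
  have hident : A - A.submatrix id J₀ * R = (A - B) * (1 - S * R) := by
    rw [← hsel A]
    have h2 : (A - B) * (1 - S * R) = (A - A * S * R) - (B - B * S * R) := by
      rw [Matrix.sub_mul, Matrix.mul_sub, Matrix.mul_sub, Matrix.mul_one, Matrix.mul_one,
        Matrix.mul_assoc A S R, Matrix.mul_assoc B S R, ← Matrix.mul_assoc A S R,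
        ← Matrix.mul_assoc B S R]
    rw [h2, hBSR, sub_self, sub_zero]
  refine ⟨J₀, R, hJinj, hRbound, ?_⟩
  rw [hident]
  calc specNorm ((A - B) * (1 - S * R)) ≤ specNorm (A - B) * specNorm (1 - S * R) :=
        specNorm_mul_le _ _
    _ ≤ specNorm (A - B) * Real.sqrt (1 + (k:ℝ) * ((n:ℝ) - (k:ℝ))) :=
        mul_le_mul_of_nonneg_left (M_bound hkn.le J₀ hJinj R hRbound hRid) (specNorm_nonneg _)

/-- **Interpolative Decomposition** (Theorem 1 of the paper).
For a real `m × n` matrix `A` and `1 ≤ k < min m n`, there are `k` column indices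
`J` (injectively chosen), an interpolation matrix `R` with entries of absolute value
at most `1`, and a permutation matrix `P` such that
`‖A - A_{:,J} R P‖₂ ≤ σ_{k+1}(A) √(1 + k (n - k))`, where `σ_{k+1}(A)` is the
spectral-norm distance from `A` to matrices of rank at most `k`. -/
theorem interpolative_decomposition {m n : ℕ} (A : Matrix (Fin m) (Fin n) ℝ)
    (k : ℕ) (hk1 : 1 ≤ k) (hk : k < min m n) :
    ∃ (J : Fin k → Fin n) (R : Matrix (Fin k) (Fin n) ℝ) (e : Equiv.Perm (Fin n)),
      Function.Injective J ∧ (∀ i j, |R i j| ≤ 1) ∧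
      specNorm (A - A.submatrix id J * R * e.permMatrix ℝ) ≤
        sInf {t : ℝ | ∃ B : Matrix (Fin m) (Fin n) ℝ, B.rank ≤ k ∧ t = specNorm (A - B)} *
          Real.sqrt (1 + (k : ℝ) * ((n : ℝ) - (k : ℝ))) := by
  classical
  have hknn : k < n := lt_of_lt_of_le hk (min_le_right _ _)
  set c := Real.sqrt (1 + (k : ℝ) * ((n : ℝ) - (k : ℝ))) with hc
  have hkr : (k:ℝ) ≤ (n:ℝ) := by exact_mod_cast hknn.le
  have hc0 : 0 < c := by
    apply Real.sqrt_pos.mpr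
    nlinarith [Nat.cast_nonneg (α := ℝ) k]
  set g : (Fin k → Fin n) × Matrix (Fin k) (Fin n) ℝ → ℝ :=
    fun p => specNorm (A - A.submatrix id p.1 * p.2) with hg
  set K : Set ((Fin k → Fin n) × Matrix (Fin k) (Fin n) ℝ) :=
    {J : Fin k → Fin n | Function.Injective J} ×ˢ {R | ∀ i j, |R i j| ≤ 1} with hK
  have hKcomp : IsCompact K := by
    apply IsCompact.prod
    · exact (Set.toFinite _).isCompact
    · have : {R : Matrix (Fin k) (Fin n) ℝ | ∀ i j, |R i j| ≤ 1} =
          Set.univ.pi (fun _ : Fin k => Set.univ.pi fun _ : Fin n => Set.Icc (-1:ℝ) 1) := by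
        ext R
        simp [Set.mem_pi, abs_le, forall_and]
        constructor
        · rintro ⟨h1, h2⟩; exact ⟨fun i j => h1 i j, fun i j => h2 i j⟩
        · rintro ⟨h1, h2⟩; exact ⟨fun i j => h1 i j, fun i j => h2 i j⟩
      rw [this]
      exact isCompact_univ_pi fun i => isCompact_univ_pi fun j => isCompact_Icc
  have hKne : K.Nonempty := by
    refine ⟨(Fin.castLE hknn.le, 0), ?_, ?_⟩
    · exact Fin.castLE_injective hknn.le
    · intro i j; simp
  have hgcont : ContinuousOn g K := by
    apply Continuous.continuousOn
    apply specNorm_continuous.comp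
    have : Continuous fun p : (Fin k → Fin n) × Matrix (Fin k) (Fin n) ℝ =>
        A.submatrix id p.1 * p.2 := by
      apply continuous_pi; intro i; apply continuous_pi; intro j
      have heq : (fun p : (Fin k → Fin n) × Matrix (Fin k) (Fin n) ℝ =>
          (A.submatrix id p.1 * p.2) i j) =
          fun p => ∑ l, A i (p.1 l) * p.2 l j := by
        funext p
        simp [Matrix.mul_apply]
      rw [heq]
      apply continuous_finset_sum
      intro l _
      exact ((continuous_of_discreteTopology
          (f := fun q : Fin k → Fin n => A i (q l))).comp continuous_fst).mul
        ((continuous_apply j).comp ((continuous_apply l).comp continuous_snd))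
    exact continuous_const.sub this
  obtain ⟨p₀, hp₀K, hp₀min⟩ := hKcomp.exists_isMinOn hKne hgcont
  have hp₀1 : Function.Injective p₀.1 := hp₀K.1
  have hp₀2 : ∀ i j, |p₀.2 i j| ≤ 1 := hp₀K.2
  have hbound : ∀ B : Matrix (Fin m) (Fin n) ℝ, B.rank ≤ k →
      g p₀ ≤ specNorm (A - B) * c := by
    intro B hB
    obtain ⟨J, R, hJinj, hRb, hle⟩ := core A B hknn hB
    exact le_trans (hp₀min (Set.mk_mem_prod hJinj hRb)) hle
  have hSne : {t : ℝ | ∃ B : Matrix (Fin m) (Fin n) ℝ, B.rank ≤ k ∧ t = specNorm (A - B)}.Nonempty :=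
    ⟨specNorm (A - 0), 0, by simp, rfl⟩
  have hlb : g p₀ / c ≤ sInf {t : ℝ | ∃ B : Matrix (Fin m) (Fin n) ℝ,
      B.rank ≤ k ∧ t = specNorm (A - B)} := by
    apply le_csInf hSne
    rintro t ⟨B, hB, rfl⟩
    rw [div_le_iff₀ hc0]
    exact hbound B hB
  refine ⟨p₀.1, p₀.2, 1, hp₀1, hp₀2, ?_⟩
  have hperm : (1 : Equiv.Perm (Fin n)).permMatrix ℝ = 1 := by
    ext a b
    simp [Equiv.Perm.permMatrix, PEquiv.toMatrix, Matrix.one_apply, Equiv.toPEquiv]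
  rw [hperm, Matrix.mul_one]
  calc specNorm (A - A.submatrix id p₀.1 * p₀.2) = g p₀ := rfl
    _ ≤ sInf _ * c := by
        rw [← div_le_iff₀ hc0] at *
        exact hlb
end

section
/- Let D be an invertible real n×n matrix, L a real n×k matrix, S a real k×k matrix, and R a real k×n matrix, and suppose that R D⁻¹ L is invertible; set D̂ := (R D⁻¹ L)⁻¹. Let b ∈ ℝⁿ, and suppose σ̂ ∈ ℝᵏ satisfies the reduced system (D̂ + S) σ̂ = D̂ R D⁻¹ b. Define σ := D⁻¹ (b − L S σ̂). Then R σ = σ̂ and (D + L S R) σ = b; i.e., the Schur-complement procedure of the single-level compressed direct solver produces an exact solution of the block-separable system. -/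
/-- **Correctness of the single-level compressed inverse (Algorithm 1).**
If `σ̂` solves the reduced system `(D̂ + S) σ̂ = D̂ R D⁻¹ b` with
`D̂ = (R D⁻¹ L)⁻¹`, then `σ := D⁻¹ (b - L S σ̂)` satisfies `R σ = σ̂` and
`(D + L S R) σ = b`. -/
theorem compressed_inverse_correct {n k : ℕ}
    (D : Matrix (Fin n) (Fin n) ℝ) (L : Matrix (Fin n) (Fin k) ℝ)
    (S : Matrix (Fin k) (Fin k) ℝ) (R : Matrix (Fin k) (Fin n) ℝ)
    (hD : IsUnit D) (hRDL : IsUnit (R * D⁻¹ * L))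
    (b : Fin n → ℝ) (σhat : Fin k → ℝ)
    (hreduced : ((R * D⁻¹ * L)⁻¹ + S).mulVec σhat =
      ((R * D⁻¹ * L)⁻¹ * R * D⁻¹).mulVec b) :
    R.mulVec (D⁻¹.mulVec (b - (L * S).mulVec σhat)) = σhat ∧
    (D + L * S * R).mulVec (D⁻¹.mulVec (b - (L * S).mulVec σhat)) = b := by
  set M := R * D⁻¹ * L with hMdef
  have hM : M * M⁻¹ = 1 := Matrix.mul_nonsing_inv _ ((Matrix.isUnit_iff_isUnit_det M).mp hRDL)
  have hDD : D * D⁻¹ = 1 := Matrix.mul_nonsing_inv _ ((Matrix.isUnit_iff_isUnit_det D).mp hD)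
  have h1 : σhat + (M * S).mulVec σhat = (R * D⁻¹).mulVec b := by
    have := congrArg (fun v => M.mulVec v) hreduced
    simp only [Matrix.mulVec_mulVec] at this
    have e1 : M * (M⁻¹ + S) = 1 + M * S := by rw [Matrix.mul_add, hM]
    have e2 : M * (M⁻¹ * R * D⁻¹) = R * D⁻¹ := by
      rw [show M⁻¹ * R * D⁻¹ = M⁻¹ * (R * D⁻¹) from Matrix.mul_assoc _ _ _, ← Matrix.mul_assoc, hM, Matrix.one_mul]
    rw [e1, e2, Matrix.add_mulVec, Matrix.one_mulVec] at this
    exact this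
  have hR : R.mulVec (D⁻¹.mulVec (b - (L * S).mulVec σhat)) = σhat := by
    rw [Matrix.mulVec_mulVec, Matrix.mulVec_sub, Matrix.mulVec_mulVec]
    have : R * D⁻¹ * (L * S) = M * S := by simp [hMdef, Matrix.mul_assoc]
    rw [this, ← h1]
    abel
  refine ⟨hR, ?_⟩
  rw [Matrix.add_mulVec]
  have hDσ : D.mulVec (D⁻¹.mulVec (b - (L * S).mulVec σhat)) = b - (L * S).mulVec σhat := by
    rw [Matrix.mulVec_mulVec, hDD, Matrix.one_mulVec]
  have hLSR : (L * S * R).mulVec (D⁻¹.mulVec (b - (L * S).mulVec σhat))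
      = (L * S).mulVec σhat := by
    rw [← Matrix.mulVec_mulVec, hR]
  rw [hDσ, hLSR]
  abel
end

section
/- Let R > 0, α > 1, and q ≥ 1. Let x₁, …, x_m ∈ ℝ³ with ‖x_i‖ ≥ α R for all i, and p₀, …, p_{q−1} ∈ ℝ³ with ‖p_k‖ = R for all k. Let T be the real m×q matrix with entries T_{ik} := w · P(x_i, p_k), where w := 4π R² / q. Then ‖T‖₂ ≤ √(m q) · (α + 1) / (q (α − 1)²). In particular, ‖T‖₂ ≤ C · (4π R² / q) with the explicit constant C = √(m q) (α + 1) / (4π R² (α − 1)²). -/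
/-- Exterior Poisson kernel of the ball of radius `R` centered at the origin in `ℝ³`. -/
noncomputable def exteriorPoissonKernel (R : ℝ) (x p : EuclideanSpace ℝ (Fin 3)) : ℝ :=
  (‖x‖ ^ 2 - R ^ 2) / (4 * Real.pi * R * ‖x - p‖ ^ 3)

/-- Pointwise bound on the weighted Poisson kernel. -/
lemma poisson_entry_bound {q : ℕ} (R α : ℝ) (hR : 0 < R) (hα : 1 < α) (hq : 1 ≤ q)
    (x p : EuclideanSpace ℝ (Fin 3)) (hx : α * R ≤ ‖x‖) (hp : ‖p‖ = R) :
    |4 * Real.pi * R ^ 2 / q * exteriorPoissonKernel R x p| ≤ (α + 1) / (q * (α - 1) ^ 2) := by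
  have hπ : (0:ℝ) < Real.pi := Real.pi_pos
  have hqR : (0:ℝ) < q := by exact_mod_cast hq
  set t : ℝ := ‖x‖ with ht
  set s : ℝ := ‖x - p‖ with hs
  have hα1 : 0 < α - 1 := by linarith
  have htR : (α - 1) * R ≤ t - R := by nlinarith
  have hs1 : t - R ≤ s := by
    have := norm_sub_norm_le x p
    rw [hp] at this; linarith
  have hs2 : (α - 1) * R ≤ s := le_trans htR hs1
  have hs0 : 0 < s := lt_of_lt_of_le (by positivity) hs2
  have htR0 : 0 < t - R := lt_of_lt_of_le (by positivity) htR
  have key : R * ((t ^ 2 - R ^ 2) * (α - 1) ^ 2) ≤ (α + 1) * s ^ 3 := by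
    have h1 : (t - R) ^ 2 * ((α - 1) * R) ≤ s ^ 3 := by nlinarith [sq_nonneg (s - (t - R))]
    have h2 : (t + R) * (α - 1) ≤ (α + 1) * (t - R) := by nlinarith
    nlinarith [mul_le_mul_of_nonneg_left h1 (le_of_lt (by linarith : (0:ℝ) < α + 1)),
      mul_le_mul_of_nonneg_right h2 (le_of_lt (mul_pos (mul_pos htR0 htR0) (mul_pos hα1 hR)))]
  have hval : 4 * Real.pi * R ^ 2 / q * exteriorPoissonKernel R x p
      = R * (t ^ 2 - R ^ 2) / (q * s ^ 3) := by
    rw [exteriorPoissonKernel, ← ht, ← hs]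
    field_simp
  have ht2 : 0 ≤ t ^ 2 - R ^ 2 := by nlinarith
  rw [hval, abs_of_nonneg (div_nonneg (by positivity) (by positivity))]
  rw [div_le_div_iff₀ (by positivity) (by positivity)]
  nlinarith [mul_le_mul_of_nonneg_left key (le_of_lt hqR)]

/-- **Proposition 1 of the paper**, with an explicit constant: the spectral norm of the
discrete Poisson-kernel operator `T` with entries `T i k = w P(xᵢ, pₖ)`,
`w = 4 π R² / q`, is bounded by `√(m q) (α + 1) / (q (α - 1)²)`, i.e. by
`C ⬝ (4 π R² / q)` with `C = √(m q) (α + 1) / (4 π R² (α - 1)²)`. -/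
theorem proxy_operator_norm_bound {m q : ℕ} (R α : ℝ) (hR : 0 < R) (hα : 1 < α)
    (hq : 1 ≤ q) (x : Fin m → EuclideanSpace ℝ (Fin 3)) (hx : ∀ i, α * R ≤ ‖x i‖)
    (p : Fin q → EuclideanSpace ℝ (Fin 3)) (hp : ∀ k, ‖p k‖ = R)
    (T : Matrix (Fin m) (Fin q) ℝ)
    (hT : ∀ i k, T i k = 4 * Real.pi * R ^ 2 / q * exteriorPoissonKernel R (x i) (p k)) :
    specNorm T ≤ Real.sqrt (m * q) * (α + 1) / (q * (α - 1) ^ 2) ∧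
    specNorm T ≤ Real.sqrt (m * q) * (α + 1) / (4 * Real.pi * R ^ 2 * (α - 1) ^ 2) *
      (4 * Real.pi * R ^ 2 / q) := by
  have hπ : (0:ℝ) < Real.pi := Real.pi_pos
  have hqR : (0:ℝ) < q := by exact_mod_cast hq
  have hα1 : 0 < α - 1 := by linarith
  set B : ℝ := (α + 1) / (q * (α - 1) ^ 2) with hB
  have hB0 : 0 ≤ B := by positivity
  have hTB : ∀ i k, |T i k| ≤ B := fun i k => by
    rw [hT i k]; exact poisson_entry_bound R α hR hα hq (x i) (p k) (hx i) (hp k)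
  have main : specNorm T ≤ Real.sqrt (m * q) * B := by
    unfold specNorm
    apply ContinuousLinearMap.opNorm_le_bound _ (by positivity)
    intro v
    simp only [LinearMap.coe_toContinuousLinearMap']
    rw [Matrix.toEuclideanLin_apply]
    have hvnorm : ‖v‖ = Real.sqrt (∑ k, v k ^ 2) := by
      rw [EuclideanSpace.norm_eq]
      congr 1; apply Finset.sum_congr rfl; intro k _; rw [Real.norm_eq_abs, sq_abs]
    have hwnorm : ‖WithLp.toLp 2 (T.mulVec v.ofLp)‖
        = Real.sqrt (∑ i, (∑ k, T i k * v k) ^ 2) := by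
      rw [EuclideanSpace.norm_eq]
      congr 1; apply Finset.sum_congr rfl; intro i _
      rw [Real.norm_eq_abs, sq_abs]; rfl
    rw [hwnorm]
    have hrow : ∀ i : Fin m, (∑ k, T i k * v k) ^ 2 ≤ q * B ^ 2 * (∑ k, v k ^ 2) := by
      intro i
      calc (∑ k, T i k * v k) ^ 2 ≤ (∑ k, T i k ^ 2) * (∑ k, v k ^ 2) :=
            Finset.sum_mul_sq_le_sq_mul_sq Finset.univ _ _
        _ ≤ (∑ _k : Fin q, B ^ 2) * (∑ k, v k ^ 2) := by
            apply mul_le_mul_of_nonneg_right _ (by positivity)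
            apply Finset.sum_le_sum; intro k _
            calc T i k ^ 2 = |T i k| ^ 2 := (sq_abs _).symm
              _ ≤ B ^ 2 := by
                  apply pow_le_pow_left₀ (abs_nonneg _) (hTB i k)
        _ = q * B ^ 2 * (∑ k, v k ^ 2) := by
            rw [Finset.sum_const, Finset.card_univ, Fintype.card_fin, nsmul_eq_mul]
    have hsum : (∑ i, (∑ k, T i k * v k) ^ 2) ≤ m * (q * B ^ 2 * (∑ k, v k ^ 2)) := by
      calc (∑ i, (∑ k, T i k * v k) ^ 2) ≤ ∑ _i : Fin m, q * B ^ 2 * (∑ k, v k ^ 2) :=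
            Finset.sum_le_sum (fun i _ => hrow i)
        _ = m * (q * B ^ 2 * (∑ k, v k ^ 2)) := by
            rw [Finset.sum_const, Finset.card_univ, Fintype.card_fin, nsmul_eq_mul]
    calc Real.sqrt (∑ i, (∑ k, T i k * v k) ^ 2)
        ≤ Real.sqrt (m * (q * B ^ 2 * (∑ k, v k ^ 2))) := Real.sqrt_le_sqrt hsum
      _ = Real.sqrt (m * q) * B * ‖v‖ := by
          have he : (m:ℝ) * (q * B ^ 2 * (∑ k, v k ^ 2))
              = ((m:ℝ) * q) * B ^ 2 * (∑ k, v k ^ 2) := by ring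
          rw [he, Real.sqrt_mul (by positivity), Real.sqrt_mul (by positivity),
            Real.sqrt_sq hB0, hvnorm]
  constructor
  · calc specNorm T ≤ Real.sqrt (m * q) * B := main
      _ = Real.sqrt (m * q) * (α + 1) / (q * (α - 1) ^ 2) := by rw [hB]; ring
  · calc specNorm T ≤ Real.sqrt (m * q) * B := main
      _ = Real.sqrt (m * q) * (α + 1) / (4 * Real.pi * R ^ 2 * (α - 1) ^ 2) *
          (4 * Real.pi * R ^ 2 / q) := by rw [hB]; field_simp
end

section
/- Let x, y ∈ ℝ³ with 0 < ‖y‖ < ‖x‖, and let p be a natural number. Then the truncated multipole expansion of the Laplace kernel satisfies | 1/‖x − y‖ − Σ_{ℓ=0}^{p} (‖y‖^ℓ / ‖x‖^{ℓ+1}) · P_ℓ( ⟨x, y⟩ / (‖x‖ ‖y‖) ) | ≤ (1 / (‖x‖ − ‖y‖)) · (‖y‖ / ‖x‖)^{p+1}. -/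
noncomputable def mca (n : ℕ) : ℝ := n.centralBinom / 4 ^ n

lemma mca_pos (n : ℕ) : 0 < mca n := by
  unfold mca
  have := n.centralBinom_pos
  positivity

lemma mca_nonneg (n : ℕ) : 0 ≤ mca n := (mca_pos n).le

lemma mca_zero : mca 0 = 1 := by simp [mca, Nat.centralBinom]

lemma mca_rec (k : ℕ) : 2 * ((k : ℝ) + 1) * mca (k + 1) = (2 * k + 1) * mca k := by
  have h := Nat.succ_mul_centralBinom_succ k
  have h' : ((k : ℝ) + 1) * ((k+1).centralBinom : ℝ) = 2 * (2 * k + 1) * k.centralBinom := by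
    exact_mod_cast congrArg (Nat.cast : ℕ → ℝ) h
  unfold mca
  have h4 : (4 : ℝ) ^ (k + 1) = 4 * 4 ^ k := by ring
  have h4p : (0:ℝ) < 4 ^ k := by positivity
  field_simp [h4]
  linear_combination (2 * (4:ℝ) ^ k) * h'

lemma mca_wt (m : ℕ) : ∑ k ∈ Finset.range (m + 1), (2 * (k:ℝ)) * (mca k * mca (m - k))
    = (m : ℝ) * ∑ k ∈ Finset.range (m + 1), mca k * mca (m - k) := by
  have refl : ∑ k ∈ Finset.range (m + 1), (2 * ((m - k : ℕ):ℝ)) * (mca k * mca (m - k))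
      = ∑ k ∈ Finset.range (m + 1), (2 * (k:ℝ)) * (mca k * mca (m - k)) := by
    rw [← Finset.sum_range_reflect
      (fun k => (2 * ((m - k : ℕ):ℝ)) * (mca k * mca (m - k))) (m+1)]
    apply Finset.sum_congr rfl
    intro k hk
    simp only [Finset.mem_range] at hk
    have h1 : m + 1 - 1 - k = m - k := by omega
    have h2 : m - (m - k) = k := by omega
    rw [h1, h2]; ring
  have e : ∑ k ∈ Finset.range (m + 1), (2 * (k:ℝ)) * (mca k * mca (m - k))
      + ∑ k ∈ Finset.range (m + 1), (2 * ((m - k : ℕ):ℝ)) * (mca k * mca (m - k))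
      = ∑ k ∈ Finset.range (m + 1), (2 * (m:ℝ)) * (mca k * mca (m - k)) := by
    rw [← Finset.sum_add_distrib]
    apply Finset.sum_congr rfl
    intro k hk
    simp only [Finset.mem_range] at hk
    have hc : ((m - k : ℕ) : ℝ) = (m : ℝ) - k := by
      have : k ≤ m := by omega
      push_cast [this]; ring
    rw [hc]; ring
  rw [refl] at e
  rw [Finset.mul_sum]
  have e2 : ∑ k ∈ Finset.range (m + 1), (2 * (m:ℝ)) * (mca k * mca (m - k))
      = 2 * ∑ k ∈ Finset.range (m + 1), (m:ℝ) * (mca k * mca (m - k)) := by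
    rw [Finset.mul_sum]
    apply Finset.sum_congr rfl
    intro k _; ring
  rw [e2] at e
  linarith

lemma mca_conv (n : ℕ) : ∑ k ∈ Finset.range (n + 1), mca k * mca (n - k) = 1 := by
  induction n with
  | zero => simp [mca_zero]
  | succ n ih =>
    have key : ((n:ℝ) + 1) * ∑ k ∈ Finset.range (n + 2), mca k * mca (n + 1 - k)
        = ((n:ℝ) + 1) * ∑ k ∈ Finset.range (n + 1), mca k * mca (n - k) := by
      have lhs1 : ((n:ℝ) + 1) * ∑ k ∈ Finset.range (n + 2), mca k * mca (n + 1 - k)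
          = ∑ k ∈ Finset.range (n + 2), (2 * (k:ℝ)) * (mca k * mca (n + 1 - k)) := by
        have h := mca_wt (n + 1)
        push_cast at h ⊢
        rw [h]
      have shift : ∑ k ∈ Finset.range (n + 2), (2 * (k:ℝ)) * (mca k * mca (n + 1 - k))
          = ∑ j ∈ Finset.range (n + 1), (2 * (j:ℝ) + 1) * (mca j * mca (n - j)) := by
        rw [Finset.sum_range_succ']
        simp only [Nat.cast_zero, mul_zero, zero_mul, add_zero]
        apply Finset.sum_congr rfl
        intro j hj
        simp only [Finset.mem_range] at hj
        have hsub : n + 1 - (j + 1) = n - j := by omega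
        rw [hsub]
        push_cast
        nlinarith [mca_rec j, mca_pos (n - j), mca_pos j]
      have expand : ∑ j ∈ Finset.range (n + 1), (2 * (j:ℝ) + 1) * (mca j * mca (n - j))
          = ∑ j ∈ Finset.range (n + 1), (2 * (j:ℝ)) * (mca j * mca (n - j))
            + ∑ j ∈ Finset.range (n + 1), mca j * mca (n - j) := by
        rw [← Finset.sum_add_distrib]
        apply Finset.sum_congr rfl
        intro j _; ring
      rw [lhs1, shift, expand, mca_wt n, ih]
      ring
    have hpos : ((n:ℝ) + 1) ≠ 0 := by positivity
    have := mul_left_cancel₀ hpos key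
    rw [this, ih]

lemma mca_le_one (n : ℕ) : mca n ≤ 1 := by
  have h := mca_conv n
  have : mca n * mca 0 ≤ ∑ k ∈ Finset.range (n + 1), mca k * mca (n - k) := by
    have hm : n ∈ Finset.range (n + 1) := by simp
    have := Finset.single_le_sum (f := fun k => mca k * mca (n - k))
      (fun k _ => mul_nonneg (mca_nonneg k) (mca_nonneg (n - k))) hm
    simpa using this
  rw [h, mca_zero, mul_one] at this
  exact this

lemma mca_def (n : ℕ) : mca n = n.centralBinom / 4 ^ n := rfl

open Complex in
lemma msummable_norm {z : ℂ} (hz : ‖z‖ < 1) :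
    Summable fun n => ‖(mca n : ℂ) * z ^ n‖ := by
  apply Summable.of_nonneg_of_le (fun n => norm_nonneg _) (fun n => ?_)
    (summable_geometric_of_lt_one (norm_nonneg z) hz)
  rw [norm_mul, norm_pow]
  have h1 : ‖((mca n : ℝ) : ℂ)‖ = |mca n| := by rw [Complex.norm_real, Real.norm_eq_abs]
  rw [h1, _root_.abs_of_nonneg (mca_nonneg n)]
  calc mca n * ‖z‖ ^ n ≤ 1 * ‖z‖ ^ n := by
        apply mul_le_mul_of_nonneg_right (mca_le_one n) (by positivity)
    _ = ‖z‖ ^ n := one_mul _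

noncomputable def mcf (z : ℂ) : ℂ := ∑' n, (mca n : ℂ) * z ^ n

lemma mcf_sq {z : ℂ} (hz : ‖z‖ < 1) : mcf z * mcf z = (1 - z)⁻¹ := by
  rw [mcf, tsum_mul_tsum_eq_tsum_sum_antidiagonal_of_summable_norm
    (msummable_norm hz) (msummable_norm hz)]
  have e : ∀ n : ℕ, ∑ kl ∈ Finset.HasAntidiagonal.antidiagonal n, ((mca kl.1 : ℂ) * z ^ kl.1) * ((mca kl.2 : ℂ) * z ^ kl.2)
      = z ^ n := by
    intro n
    have : ∀ kl ∈ Finset.HasAntidiagonal.antidiagonal n,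
        ((mca kl.1 : ℂ) * z ^ kl.1) * ((mca kl.2 : ℂ) * z ^ kl.2)
        = ((mca kl.1 * mca kl.2 : ℝ) : ℂ) * z ^ n := by
      intro kl hkl
      rw [Finset.HasAntidiagonal.mem_antidiagonal] at hkl
      rw [← hkl]
      push_cast
      ring
    rw [Finset.sum_congr rfl this, ← Finset.sum_mul, ← Complex.ofReal_sum]
    rw [Finset.Nat.sum_antidiagonal_eq_sum_range_succ (fun i j => mca i * mca j)]
    rw [mca_conv n]
    simp
  rw [tsum_congr e, tsum_geometric_of_norm_lt_one hz]

noncomputable def mw (u : ℝ) : ℂ := (u : ℂ) + (Real.sqrt (1 - u ^ 2) : ℂ) * Complex.I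

noncomputable def mchat (u : ℝ) (ℓ : ℕ) : ℂ :=
  ∑ kl ∈ Finset.HasAntidiagonal.antidiagonal ℓ,
    ((mca kl.1 * mca kl.2 : ℝ) : ℂ) * mw u ^ kl.1 * (starRingEnd ℂ) (mw u) ^ kl.2

noncomputable def mc (u : ℝ) (ℓ : ℕ) : ℝ := (mchat u ℓ).re

lemma mw_normSq {u : ℝ} (hu : |u| ≤ 1) : Complex.normSq (mw u) = 1 := by
  have h1 : (1:ℝ) - u ^ 2 ≥ 0 := by
    have := abs_le.mp hu
    nlinarith
  rw [mw, Complex.normSq_add_mul_I, Real.sq_sqrt h1]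
  ring

lemma mw_norm {u : ℝ} (hu : |u| ≤ 1) : ‖mw u‖ = 1 := by
  have := mw_normSq hu
  have h : ‖mw u‖ ^ 2 = 1 := by
    rw [Complex.sq_norm, this]
  nlinarith [norm_nonneg (mw u)]

lemma mw_add_conj (u : ℝ) : mw u + (starRingEnd ℂ) (mw u) = 2 * u := by
  rw [Complex.add_conj]
  simp [mw]

lemma mchat_norm_le {u : ℝ} (hu : |u| ≤ 1) (ℓ : ℕ) : ‖mchat u ℓ‖ ≤ 1 := by
  unfold mchat
  calc ‖∑ kl ∈ Finset.HasAntidiagonal.antidiagonal ℓ,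
        ((mca kl.1 * mca kl.2 : ℝ) : ℂ) * mw u ^ kl.1 * (starRingEnd ℂ) (mw u) ^ kl.2‖
      ≤ ∑ kl ∈ Finset.HasAntidiagonal.antidiagonal ℓ,
        ‖((mca kl.1 * mca kl.2 : ℝ) : ℂ) * mw u ^ kl.1 * (starRingEnd ℂ) (mw u) ^ kl.2‖ :=
        norm_sum_le _ _
    _ = ∑ kl ∈ Finset.HasAntidiagonal.antidiagonal ℓ, mca kl.1 * mca kl.2 := by
        apply Finset.sum_congr rfl
        intro kl _
        rw [norm_mul, norm_mul, norm_pow, norm_pow, mw_norm hu, RingHomIsometric.norm_map, mw_norm hu]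
        simp only [one_pow, mul_one]
        rw [Complex.norm_real]
        exact _root_.abs_of_nonneg (mul_nonneg (mca_nonneg _) (mca_nonneg _))
    _ = 1 := by
        rw [Finset.Nat.sum_antidiagonal_eq_sum_range_succ (fun i j => mca i * mca j)]
        exact mca_conv ℓ

lemma mc_abs_le {u : ℝ} (hu : |u| ≤ 1) (ℓ : ℕ) : |mc u ℓ| ≤ 1 :=
  le_trans (Complex.abs_re_le_norm _) (mchat_norm_le hu ℓ)

lemma hasSum_mc {u : ℝ} (hu : |u| ≤ 1) {t : ℝ} (h0 : 0 < t) (h1 : t < 1) :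
    HasSum (fun ℓ => mc u ℓ * t ^ ℓ)
      (Real.sqrt (1 - 2 * t * u + t ^ 2))⁻¹ := by
  set w := mw u with hw
  set z := (t : ℂ) * w with hzdef
  have hnz : ‖z‖ = t := by
    rw [hzdef, norm_mul, Complex.norm_real, mw_norm hu, mul_one,
      Real.norm_eq_abs, _root_.abs_of_nonneg h0.le]
  have hz1 : ‖z‖ < 1 := by rw [hnz]; exact h1
  have hzc : ‖(starRingEnd ℂ) z‖ < 1 := by rwa [RingHomIsometric.norm_map]
  -- Cauchy product
  have hinner : ∀ n : ℕ, ∑ kl ∈ Finset.HasAntidiagonal.antidiagonal n,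
      ((mca kl.1 : ℂ) * z ^ kl.1) * ((mca kl.2 : ℂ) * ((starRingEnd ℂ) z) ^ kl.2)
      = mchat u n * (t : ℂ) ^ n := by
    intro n
    rw [mchat, Finset.sum_mul]
    apply Finset.sum_congr rfl
    intro kl hkl
    rw [Finset.HasAntidiagonal.mem_antidiagonal] at hkl
    have hcz : (starRingEnd ℂ) z = (t : ℂ) * (starRingEnd ℂ) w := by
      rw [hzdef, map_mul, Complex.conj_ofReal]
    rw [hzdef, hcz, mul_pow, mul_pow, ← hkl]
    push_cast
    ring
  have hsum1 : Summable fun n => ‖mchat u n * (t : ℂ) ^ n‖ := by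
    have := summable_norm_sum_mul_antidiagonal_of_summable_norm
      (msummable_norm hz1) (msummable_norm hzc)
    simpa only [hinner] using this
  have hsum2 : Summable fun n => mchat u n * (t : ℂ) ^ n := hsum1.of_norm
  have htsum : ∑' n, mchat u n * (t : ℂ) ^ n = mcf z * mcf ((starRingEnd ℂ) z) := by
    rw [mcf, mcf, tsum_mul_tsum_eq_tsum_sum_antidiagonal_of_summable_norm
      (msummable_norm hz1) (msummable_norm hzc)]
    exact (tsum_congr hinner).symm
  -- mcf (conj z) = conj (mcf z)
  have hconj : mcf ((starRingEnd ℂ) z) = (starRingEnd ℂ) (mcf z) := by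
    rw [mcf, mcf]
    rw [show (starRingEnd ℂ) (∑' n, (mca n : ℂ) * z ^ n) = star (∑' n, (mca n : ℂ) * z ^ n) from rfl,
      tsum_star]
    apply tsum_congr
    intro n
    simp only [star_mul', star_pow]
    rw [show (star z : ℂ) = (starRingEnd ℂ) z from rfl,
      show (star ((mca n : ℝ) : ℂ)) = (starRingEnd ℂ) ((mca n : ℝ):ℂ) from rfl, Complex.conj_ofReal]
  set r : ℝ := Complex.normSq (mcf z) with hr
  have hFr : mcf z * mcf ((starRingEnd ℂ) z) = (r : ℂ) := by
    rw [hconj, Complex.mul_conj]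
  -- D
  set D : ℝ := 1 - 2 * t * u + t ^ 2 with hD
  have hDpos : 0 < D := by
    have := abs_le.mp hu
    nlinarith
  have hone : (1 - z) * (1 - (starRingEnd ℂ) z) = (D : ℂ) := by
    have hsum : z + (starRingEnd ℂ) z = ((2 * t * u : ℝ) : ℂ) := by
      have hcz : (starRingEnd ℂ) z = (t : ℂ) * (starRingEnd ℂ) w := by
        rw [hzdef, map_mul, Complex.conj_ofReal]
      rw [hzdef, hcz, ← mul_add, mw_add_conj u]
      push_cast
      ring
    have hprod : z * (starRingEnd ℂ) z = ((t ^ 2 : ℝ) : ℂ) := by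
      rw [Complex.mul_conj]
      rw [hzdef]
      rw [Complex.normSq_mul, Complex.normSq_ofReal, mw_normSq hu]
      push_cast
      ring
    have : (1 - z) * (1 - (starRingEnd ℂ) z) = 1 - (z + (starRingEnd ℂ) z) + z * (starRingEnd ℂ) z := by
      ring
    rw [this, hsum, hprod, hD]
    push_cast
    ring
  have hr2 : (r : ℂ) * (r : ℂ) = ((D : ℂ))⁻¹ := by
    rw [← hFr]
    have expand : mcf z * mcf ((starRingEnd ℂ) z) * (mcf z * mcf ((starRingEnd ℂ) z))
        = (mcf z * mcf z) * (mcf ((starRingEnd ℂ) z) * mcf ((starRingEnd ℂ) z)) := by ring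
    rw [expand, mcf_sq hz1, mcf_sq hzc, ← mul_inv, hone]
  have hr2' : r * r = D⁻¹ := by
    have := hr2
    rw [← Complex.ofReal_mul, ← Complex.ofReal_inv] at this
    exact_mod_cast this
  have hrnn : 0 ≤ r := Complex.normSq_nonneg _
  have hrval : r = (Real.sqrt D)⁻¹ := by
    rw [← Real.sqrt_inv]
    rw [← Real.sqrt_mul_self hrnn]
    rw [hr2']
  -- now take real parts of the HasSum
  have hhs : HasSum (fun n => mchat u n * (t : ℂ) ^ n) ((r : ℂ)) := by
    rw [← hFr, ← htsum]
    exact hsum2.hasSum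
  have hre := Complex.hasSum_re hhs
  simp only [Complex.ofReal_re] at hre
  have : ∀ n : ℕ, (mchat u n * (t : ℂ) ^ n).re = mc u n * t ^ n := by
    intro n
    rw [← Complex.ofReal_pow, mul_comm, Complex.re_ofReal_mul, mc]
    ring
  rw [← hrval]
  simpa only [this] using hre

/-- Legendre polynomial of degree `ℓ` via the Rodrigues formula, normalized so that
`legendre ℓ` evaluates to `1` at `1`. -/
noncomputable def legendre (ℓ : ℕ) : Polynomial ℝ :=
  ((2 ^ ℓ * Nat.factorial ℓ : ℝ)⁻¹) •
    Polynomial.derivative^[ℓ] ((Polynomial.X ^ 2 - 1) ^ ℓ)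


open Polynomial in
lemma legendre_eval_raw (ℓ : ℕ) (u : ℝ) :
    (legendre ℓ).eval u = ∑ i ∈ Finset.range (ℓ + 1),
      (2 ^ ℓ * Nat.factorial ℓ : ℝ)⁻¹ *
        ((-1) ^ (i + ℓ) * (ℓ.choose i : ℝ) * ((2 * i).descFactorial ℓ : ℝ)) * u ^ (2 * i - ℓ) := by
  have hexp : ((X : Polynomial ℝ) ^ 2 - 1) ^ ℓ
      = ∑ i ∈ Finset.range (ℓ + 1), C ((-1 : ℝ) ^ (i + ℓ) * (ℓ.choose i : ℝ)) * X ^ (2 * i) := by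
    rw [sub_pow]
    apply Finset.sum_congr rfl
    intro i _
    rw [one_pow, mul_one, map_mul, map_pow, map_neg, map_one, map_natCast, ← pow_mul]
    ring
  rw [legendre, hexp, Polynomial.iterate_derivative_sum]
  rw [Polynomial.eval_smul]
  rw [Polynomial.eval_finset_sum, Finset.smul_sum, Finset.sum_congr rfl]
  intro i _
  rw [Polynomial.iterate_derivative_C_mul, Polynomial.iterate_derivative_X_pow_eq_smul]
  simp only [smul_eq_mul, eval_mul, eval_C, Polynomial.eval_smul,
    eval_pow, eval_X, nsmul_eq_mul, Polynomial.eval_natCast, Polynomial.eval_mul]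
  ring

lemma legendre_eval_eq (ℓ : ℕ) (u : ℝ) :
    (legendre ℓ).eval u = ∑ kl ∈ Finset.HasAntidiagonal.antidiagonal ℓ,
      mca kl.1 * (kl.1.choose kl.2 : ℝ) * (-1) ^ kl.2 * (2 * u) ^ (kl.1 - kl.2) := by
  rw [legendre_eval_raw]
  rw [Finset.Nat.sum_antidiagonal_eq_sum_range_succ
    (fun n j => mca n * (n.choose j : ℝ) * (-1) ^ j * (2 * u) ^ (n - j))]
  apply Finset.sum_congr rfl
  intro i hi
  simp only [Finset.mem_range] at hi
  have hiℓ : i ≤ ℓ := by omega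
  by_cases h : ℓ ≤ 2 * i
  · have hji : ℓ - i ≤ i := by omega
    have hexp : 2 * i - ℓ = i - (ℓ - i) := by omega
    have hfne : ∀ m : ℕ, (m.factorial : ℝ) ≠ 0 := fun m => Nat.cast_ne_zero.mpr (Nat.factorial_ne_zero m)
    have hdesc : ((2 * i).descFactorial ℓ : ℝ) = (((2 * i).factorial : ℕ) : ℝ) / (((i - (ℓ - i)).factorial : ℕ) : ℝ) := by
      have hkey := Nat.factorial_mul_descFactorial h
      rw [hexp] at hkey
      have hkey' : (((i - (ℓ - i)).factorial : ℕ) : ℝ) * ((2 * i).descFactorial ℓ : ℝ) = (((2 * i).factorial : ℕ) : ℝ) := by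
        exact_mod_cast congrArg (Nat.cast : ℕ → ℝ) hkey
      field_simp
      linarith [hkey']
    have hch1 : (ℓ.choose i : ℝ) = (ℓ.factorial : ℝ) / (i.factorial * (ℓ - i).factorial) := Nat.cast_choose ℝ hiℓ
    have hch2 : (i.choose (ℓ - i) : ℝ) = (i.factorial : ℝ) / ((ℓ - i).factorial * (i - (ℓ - i)).factorial) :=
      Nat.cast_choose ℝ hji
    have hcb : (i.centralBinom : ℝ) = (((2 * i).factorial : ℕ) : ℝ) / (i.factorial * i.factorial) := by
      rw [Nat.centralBinom, Nat.cast_choose ℝ (show i ≤ 2 * i by omega),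
        show 2 * i - i = i by omega]
    have hsign : ((-1 : ℝ)) ^ (i + ℓ) = (-1 : ℝ) ^ (ℓ - i) := by
      have : i + ℓ = 2 * i + (ℓ - i) := by omega
      rw [this, pow_add, pow_mul]
      norm_num
    have h4 : (4 : ℝ) ^ i = 2 ^ ℓ * 2 ^ (2 * i - ℓ) := by
      rw [← pow_add]
      have : ℓ + (2 * i - ℓ) = 2 * i := by omega
      rw [this]
      rw [show (4:ℝ) = 2^2 by norm_num, ← pow_mul]
    have hmul : (2 * u) ^ (i - (ℓ - i)) = 2 ^ (2 * i - ℓ) * u ^ (2 * i - ℓ) := by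
      rw [mul_pow, hexp]
    rw [mca_def, hdesc, hch1, hch2, hcb, hsign, hmul, h4, hexp]
    have h2ℓ : (2 : ℝ) ^ ℓ ≠ 0 := by positivity
    have h2e : (2 : ℝ) ^ (2 * i - ℓ) ≠ 0 := by positivity
    field_simp
  · have hd0 : (2 * i).descFactorial ℓ = 0 :=
      Nat.descFactorial_eq_zero_iff_lt.mpr (by omega)
    have hc0 : i.choose (ℓ - i) = 0 := Nat.choose_eq_zero_of_lt (by omega)
    rw [hd0, hc0]
    simp

-- real version of the series f
lemma msummable_normR {z : ℝ} (hz : |z| < 1) :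
    Summable fun n => |mca n * z ^ n| := by
  apply Summable.of_nonneg_of_le (fun n => abs_nonneg _) (fun n => ?_)
    (summable_geometric_of_lt_one (abs_nonneg z) hz)
  rw [abs_mul, abs_pow, _root_.abs_of_nonneg (mca_nonneg n)]
  calc mca n * |z| ^ n ≤ 1 * |z| ^ n :=
        mul_le_mul_of_nonneg_right (mca_le_one n) (by positivity)
    _ = |z| ^ n := one_mul _

lemma msummableR {z : ℝ} (hz : |z| < 1) : Summable fun n => mca n * z ^ n :=
  (msummable_normR hz).of_abs

noncomputable def mcfR (z : ℝ) : ℝ := ∑' n, mca n * z ^ n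

lemma mcfR_sq {z : ℝ} (hz : |z| < 1) : mcfR z * mcfR z = (1 - z)⁻¹ := by
  have hz' : ‖z‖ < 1 := by rwa [Real.norm_eq_abs]
  have hn : Summable fun n => ‖mca n * z ^ n‖ := by
    simpa only [Real.norm_eq_abs] using msummable_normR hz
  rw [mcfR, tsum_mul_tsum_eq_tsum_sum_antidiagonal_of_summable_norm hn hn]
  have e : ∀ n : ℕ, ∑ kl ∈ Finset.HasAntidiagonal.antidiagonal n, (mca kl.1 * z ^ kl.1) * (mca kl.2 * z ^ kl.2)
      = z ^ n := by
    intro n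
    have h1 : ∀ kl ∈ Finset.HasAntidiagonal.antidiagonal n,
        (mca kl.1 * z ^ kl.1) * (mca kl.2 * z ^ kl.2) = (mca kl.1 * mca kl.2) * z ^ n := by
      intro kl hkl
      rw [Finset.HasAntidiagonal.mem_antidiagonal] at hkl
      rw [← hkl, pow_add]
      ring
    rw [Finset.sum_congr rfl h1, ← Finset.sum_mul,
      Finset.Nat.sum_antidiagonal_eq_sum_range_succ (fun i j => mca i * mca j), mca_conv n,
      one_mul]
  rw [tsum_congr e, tsum_geometric_of_norm_lt_one hz']

lemma mcfR_pos {z : ℝ} (hz : |z| < 1/2) : 0 < mcfR z := by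
  have hz1 : |z| < 1 := by linarith
  have htail : |mcfR z - 1| ≤ |z| / (1 - |z|) := by
    have h0 : mca 0 * z ^ 0 = 1 := by
      have h1 := mca_conv 0
      simp at h1 ⊢
      nlinarith [h1, mca_nonneg 0, mca_le_one 0]
    have hsplit := Summable.sum_add_tsum_nat_add 1 (msummableR hz1)
    rw [Finset.sum_range_one, h0] at hsplit
    have : mcfR z - 1 = ∑' n, mca (n + 1) * z ^ (n + 1) := by
      rw [mcfR, ← hsplit]; ring
    rw [this]
    have hb : ∀ n : ℕ, |mca (n + 1) * z ^ (n + 1)| ≤ |z| * |z| ^ n := by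
      intro n
      rw [abs_mul, abs_pow, _root_.abs_of_nonneg (mca_nonneg _)]
      calc mca (n+1) * |z| ^ (n+1) ≤ 1 * |z| ^ (n+1) :=
            mul_le_mul_of_nonneg_right (mca_le_one _) (by positivity)
        _ = |z| * |z| ^ n := by ring
    have hs2 : Summable fun n : ℕ => |z| * |z| ^ n :=
      (summable_geometric_of_lt_one (abs_nonneg z) hz1).mul_left _
    calc |∑' n, mca (n + 1) * z ^ (n + 1)| ≤ ∑' n, |mca (n + 1) * z ^ (n + 1)| := by
          simpa only [Real.norm_eq_abs] using
            norm_tsum_le_tsum_norm (f := fun n => mca (n + 1) * z ^ (n + 1))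
              (by simpa only [Real.norm_eq_abs, Function.comp_def] using
                ((msummableR hz1).comp_injective (add_left_injective 1)).abs)
      _ ≤ ∑' n : ℕ, |z| * |z| ^ n := by
          apply Summable.tsum_le_tsum hb _ hs2
          · exact ((msummableR hz1).comp_injective (add_left_injective 1)).abs
      _ = |z| * (1 - |z|)⁻¹ := by
          rw [tsum_mul_left, tsum_geometric_of_lt_one (abs_nonneg z) hz1]
      _ = |z| / (1 - |z|) := by ring
  have hlt : |z| / (1 - |z|) < 1 := by
    rw [div_lt_one (by linarith)]
    linarith
  have := abs_le.mp htail
  linarith [this.1]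

lemma mcfR_eq_inv_sqrt {z : ℝ} (hz : |z| < 1/2) : mcfR z = (Real.sqrt (1 - z))⁻¹ := by
  have hz1 : |z| < 1 := by linarith
  have hsq := mcfR_sq hz1
  have hpos := mcfR_pos hz
  have h1z : 0 < 1 - z := by
    have := abs_lt.mp hz1
    linarith
  have : Real.sqrt (1 - z) = (mcfR z)⁻¹ := by
    rw [show (1:ℝ) - z = ((mcfR z)⁻¹)^2 by
      rw [sq]
      rw [← mul_inv, hsq, inv_inv]]
    exact Real.sqrt_sq (by positivity)
  rw [this, inv_inv]

lemma hasSum_legendre {u : ℝ} (hu : |u| ≤ 1) {t : ℝ} (h0 : 0 < t) (h1 : t ≤ 1/5) :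
    HasSum (fun ℓ => (legendre ℓ).eval u * t ^ ℓ)
      ((Real.sqrt (1 - 2 * t * u + t ^ 2))⁻¹) := by
  set G : ℕ × ℕ → ℝ := fun nj =>
    mca nj.1 * (nj.1.choose nj.2 : ℝ) * (-1) ^ nj.2 * (2 * u) ^ (nj.1 - nj.2) * t ^ (nj.1 + nj.2)
    with hGdef
  set H : ℕ × ℕ → ℝ := fun nj =>
    mca nj.1 * (nj.1.choose nj.2 : ℝ) * 2 ^ (nj.1 - nj.2) * t ^ (nj.1 + nj.2) with hHdef
  have hHnn : ∀ nj, 0 ≤ H nj := by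
    intro nj
    have := mca_nonneg nj.1
    positivity
  have habs : ∀ nj, |G nj| ≤ H nj := by
    intro nj
    rw [hGdef, hHdef]
    simp only
    rw [abs_mul, abs_mul, abs_mul, abs_mul, abs_pow, abs_pow, abs_pow, abs_neg, abs_one,
      one_pow, mul_one, _root_.abs_of_nonneg (mca_nonneg nj.1),
      Nat.abs_cast, _root_.abs_of_nonneg h0.le]
    apply mul_le_mul_of_nonneg_right _ (by positivity)
    apply mul_le_mul_of_nonneg_left _
      (mul_nonneg (mca_nonneg _) (Nat.cast_nonneg _))
    apply pow_le_pow_left₀ (abs_nonneg _)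
    rw [abs_mul]
    simp only [abs_two]
    calc 2 * |u| ≤ 2 * 1 := by linarith
      _ = 2 := by norm_num
  have hq : 0 < t * (2 + t) := by nlinarith
  have hq1 : t * (2 + t) < 1/2 := by nlinarith
  have hHrow : ∀ n, HasSum (fun j => H (n, j)) (mca n * (t * (2 + t)) ^ n) := by
    intro n
    have hzero : ∀ j ∉ Finset.range (n + 1), H (n, j) = 0 := by
      intro j hj
      simp only [Finset.mem_range] at hj
      have : n.choose j = 0 := Nat.choose_eq_zero_of_lt (by omega)
      rw [hHdef]
      simp [this]
    have := hasSum_sum_of_ne_finset_zero (L := SummationFilter.unconditional ℕ) hzero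
    convert this using 1
    rw [hHdef]
    simp only
    rw [mul_pow, show (2:ℝ) + t = t + 2 by ring, add_pow]
    rw [Finset.mul_sum, Finset.mul_sum]
    apply Finset.sum_congr rfl
    intro j hj
    simp only [Finset.mem_range] at hj
    rw [pow_add]
    push_cast
    ring
  have hHrowsum : Summable (fun n => mca n * (t * (2 + t)) ^ n) := by
    apply msummableR
    rw [_root_.abs_of_nonneg hq.le]
    linarith
  have hHsum : Summable H := by
    rw [summable_prod_of_nonneg hHnn]
    constructor
    · intro n
      exact (hHrow n).summable
    · apply Summable.congr hHrowsum
      intro n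
      exact ((hHrow n).tsum_eq).symm
  have hGsum : Summable G := by
    apply Summable.of_norm_bounded hHsum
    intro nj
    rw [Real.norm_eq_abs]
    exact habs nj
  set S : ℝ := ∑' nj, G nj with hS
  have hG : HasSum G S := hGsum.hasSum
  -- (A) evaluate S by rows
  set z : ℝ := t * (2 * u - t) with hz
  have hzabs : |z| < 1/2 := by
    rw [hz, abs_mul, _root_.abs_of_nonneg h0.le]
    calc t * |2 * u - t| ≤ t * (2 + t) := by
          apply mul_le_mul_of_nonneg_left _ h0.le
          rw [abs_sub_comm]
          calc |t - 2 * u| ≤ |t| + |2 * u| := abs_sub _ _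
            _ ≤ t + 2 := by
                rw [_root_.abs_of_nonneg h0.le, abs_mul, abs_two]
                nlinarith
            _ ≤ 2 + t := by linarith
      _ < 1/2 := hq1
  have hzabs1 : |z| < 1 := by linarith
  have hGrow : ∀ n, HasSum (fun j => G (n, j)) (mca n * z ^ n) := by
    intro n
    have hzero : ∀ j ∉ Finset.range (n + 1), G (n, j) = 0 := by
      intro j hj
      simp only [Finset.mem_range] at hj
      have : n.choose j = 0 := Nat.choose_eq_zero_of_lt (by omega)
      rw [hGdef]
      simp [this]
    have := hasSum_sum_of_ne_finset_zero (L := SummationFilter.unconditional ℕ) hzero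
    convert this using 1
    rw [hGdef]
    simp only
    rw [hz, mul_pow, show 2 * u - t = -t + 2 * u by ring, add_pow]
    rw [Finset.mul_sum, Finset.mul_sum]
    apply Finset.sum_congr rfl
    intro j hj
    simp only [Finset.mem_range] at hj
    rw [pow_add, neg_pow]
    push_cast
    ring
  have hA : HasSum (fun n => mca n * z ^ n) S := hG.prod_fiberwise hGrow
  have hSz : S = mcfR z := by
    rw [← hA.tsum_eq, mcfR]
  have hD : 1 - z = 1 - 2 * t * u + t ^ 2 := by rw [hz]; ring
  have hSval : S = (Real.sqrt (1 - 2 * t * u + t ^ 2))⁻¹ := by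
    rw [hSz, mcfR_eq_inv_sqrt hzabs, hD]
  -- (B) regroup by antidiagonal
  have hGe : HasSum (G ∘ (Finset.HasAntidiagonal.sigmaAntidiagonalEquivProd (A := ℕ))) S :=
    (Equiv.hasSum_iff _).mpr hG
  have hfiber : ∀ ℓ : ℕ, HasSum
      (fun c : {x // x ∈ Finset.HasAntidiagonal.antidiagonal ℓ} =>
        (G ∘ (Finset.HasAntidiagonal.sigmaAntidiagonalEquivProd (A := ℕ))) ⟨ℓ, c⟩)
      ((legendre ℓ).eval u * t ^ ℓ) := by
    intro ℓ
    have hfin : HasSum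
        (fun c : {x // x ∈ Finset.HasAntidiagonal.antidiagonal ℓ} =>
          (G ∘ (Finset.HasAntidiagonal.sigmaAntidiagonalEquivProd (A := ℕ))) ⟨ℓ, c⟩)
        (∑ c : {x // x ∈ Finset.HasAntidiagonal.antidiagonal ℓ},
          (G ∘ (Finset.HasAntidiagonal.sigmaAntidiagonalEquivProd (A := ℕ))) ⟨ℓ, c⟩) := hasSum_fintype _
    convert hfin using 1
    have e1 : ∑ c : {x // x ∈ Finset.HasAntidiagonal.antidiagonal ℓ},
        (G ∘ (Finset.HasAntidiagonal.sigmaAntidiagonalEquivProd (A := ℕ))) ⟨ℓ, c⟩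
        = ∑ kl ∈ Finset.HasAntidiagonal.antidiagonal ℓ, G kl := by
      rw [← Finset.sum_coe_sort (Finset.HasAntidiagonal.antidiagonal ℓ) G]
      rfl
    rw [e1, legendre_eval_eq, Finset.sum_mul]
    apply Finset.sum_congr rfl
    intro kl hkl
    rw [Finset.HasAntidiagonal.mem_antidiagonal] at hkl
    rw [hGdef]
    simp only
    rw [hkl]
  have hB := HasSum.sigma hGe hfiber
  rwa [hSval] at hB

lemma legendre_eval_crude {u : ℝ} (hu : |u| ≤ 1) (ℓ : ℕ) :
    |(legendre ℓ).eval u| ≤ 2 * 8 ^ ℓ := by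
  rw [legendre_eval_eq]
  calc |∑ kl ∈ Finset.HasAntidiagonal.antidiagonal ℓ,
        mca kl.1 * (kl.1.choose kl.2 : ℝ) * (-1) ^ kl.2 * (2 * u) ^ (kl.1 - kl.2)|
      ≤ ∑ kl ∈ Finset.HasAntidiagonal.antidiagonal ℓ,
        |mca kl.1 * (kl.1.choose kl.2 : ℝ) * (-1) ^ kl.2 * (2 * u) ^ (kl.1 - kl.2)| :=
        Finset.abs_sum_le_sum_abs _ _
    _ ≤ ∑ _kl ∈ Finset.HasAntidiagonal.antidiagonal ℓ, (4 : ℝ) ^ ℓ := by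
        apply Finset.sum_le_sum
        intro kl hkl
        rw [Finset.HasAntidiagonal.mem_antidiagonal] at hkl
        have h1 : kl.1 ≤ ℓ := by omega
        rw [abs_mul, abs_mul, abs_mul, abs_pow, abs_pow (2*u)]
        simp only [abs_neg, abs_one, one_pow, mul_one]
        rw [_root_.abs_of_nonneg (mca_nonneg kl.1), Nat.abs_cast]
        have hc : (kl.1.choose kl.2 : ℝ) ≤ 2 ^ ℓ := by
          have h2 : kl.1.choose kl.2 ≤ 2 ^ kl.1 := by
            calc kl.1.choose kl.2 ≤ ∑ m ∈ Finset.range (kl.1 + 1), kl.1.choose m := by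
                  by_cases hj : kl.2 ≤ kl.1
                  · exact Finset.single_le_sum (f := fun m => kl.1.choose m)
                      (fun m _ => Nat.zero_le _) (Finset.mem_range.mpr (by omega))
                  · rw [Nat.choose_eq_zero_of_lt (by omega)]
                    exact Nat.zero_le _
              _ = 2 ^ kl.1 := Nat.sum_range_choose kl.1
          calc (kl.1.choose kl.2 : ℝ) ≤ (2:ℝ) ^ kl.1 := by exact_mod_cast h2
            _ ≤ 2 ^ ℓ := by
                apply pow_le_pow_right₀ (by norm_num)
                omega
        have hup : |2 * u| ^ (kl.1 - kl.2) ≤ 2 ^ ℓ := by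
          calc |2 * u| ^ (kl.1 - kl.2) ≤ 2 ^ (kl.1 - kl.2) := by
                apply pow_le_pow_left₀ (abs_nonneg _)
                rw [abs_mul, abs_two]
                nlinarith
            _ ≤ 2 ^ ℓ := by
                apply pow_le_pow_right₀ (by norm_num)
                omega
        have hm0 := mca_nonneg kl.1
        have hm1 := mca_le_one kl.1
        have hc0 : (0:ℝ) ≤ (kl.1.choose kl.2 : ℝ) := Nat.cast_nonneg _
        have hu0 : (0:ℝ) ≤ |2 * u| ^ (kl.1 - kl.2) := by positivity
        have h4 : (4:ℝ) ^ ℓ = 2 ^ ℓ * 2 ^ ℓ := by rw [← mul_pow]; norm_num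
        rw [h4]
        nlinarith [mul_le_mul hc hup hu0 (by positivity : (0:ℝ) ≤ (2:ℝ) ^ ℓ),
          mul_nonneg hc0 hu0]
    _ = ((ℓ + 1 : ℕ) : ℝ) * 4 ^ ℓ := by
        rw [Finset.sum_const, Finset.Nat.card_antidiagonal]
        simp [nsmul_eq_mul]
    _ ≤ 2 * 8 ^ ℓ := by
        have h2 : ((ℓ + 1 : ℕ) : ℝ) ≤ 2 * 2 ^ ℓ := by
          have := Nat.lt_two_pow_self (n := ℓ)
          have : (ℓ : ℝ) < 2 ^ ℓ := by exact_mod_cast this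
          push_cast
          nlinarith [this, one_le_pow₀ (show (1:ℝ) ≤ 2 by norm_num) (n := ℓ)]
        calc ((ℓ + 1 : ℕ) : ℝ) * 4 ^ ℓ ≤ (2 * 2 ^ ℓ) * 4 ^ ℓ :=
              mul_le_mul_of_nonneg_right h2 (by positivity)
          _ = 2 * 8 ^ ℓ := by rw [mul_assoc, ← mul_pow]; norm_num

set_option maxHeartbeats 2000000 in
lemma legendre_eq_mc {u : ℝ} (hu : |u| ≤ 1) (ℓ : ℕ) : (legendre ℓ).eval u = mc u ℓ := by
  set d : ℕ → ℝ := fun j => (legendre j).eval u - mc u j with hd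
  have hdb : ∀ j, |d j| ≤ 3 * 8 ^ j := by
    intro j
    have h8 : (1:ℝ) ≤ 8 ^ j := one_le_pow₀ (by norm_num)
    calc |d j| ≤ |(legendre j).eval u| + |mc u j| := abs_sub _ _
      _ ≤ 2 * 8 ^ j + 1 := add_le_add (legendre_eval_crude hu j) (mc_abs_le hu j)
      _ ≤ 3 * 8 ^ j := by linarith
  have hzero : ∀ t : ℝ, 0 < t → t ≤ 1/5 → HasSum (fun j => d j * t ^ j) 0 := by
    intro t h0 h1
    have h2 := hasSum_legendre hu h0 h1
    have h3 := hasSum_mc hu h0 (by linarith)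
    have h4 : (fun j => d j * t ^ j)
        = fun j => (legendre j).eval u * t ^ j - mc u j * t ^ j := by
      funext j; rw [hd]; ring
    rw [h4]
    simpa using h2.sub h3
  induction ℓ using Nat.strong_induction_on with
  | _ m ih =>
  have key : ∀ t : ℝ, 0 < t → t ≤ 1/16 → |d m| ≤ 6 * 8 ^ (m + 1) * t := by
    intro t h0 h1
    have h8t : 0 < 8 * t := by linarith
    have h8t1 : 8 * t ≤ 1/2 := by linarith
    have h8t2 : |8 * t| < 1 := by rw [_root_.abs_of_nonneg h8t.le]; linarith
    have hs := hzero t h0 (by linarith)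
    have hsump := hs.summable
    have hsplit := Summable.sum_add_tsum_nat_add (m + 1) hsump
    rw [hs.tsum_eq] at hsplit
    have hfront : ∑ i ∈ Finset.range (m + 1), d i * t ^ i = d m * t ^ m := by
      rw [Finset.sum_eq_single_of_mem m (Finset.mem_range.mpr (by omega))]
      intro i hi hne
      have : d i = 0 := by
        rw [hd]
        simp only
        rw [ih i (by simp only [Finset.mem_range] at hi; omega)]
        ring
      rw [this, zero_mul]
    rw [hfront] at hsplit
    -- d m * t^m = - tail
    have htail : d m * t ^ m = - ∑' i, d (i + (m + 1)) * t ^ (i + (m + 1)) := by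
      linarith [hsplit]
    -- bound tail
    have hmaj : ∀ i : ℕ, |d (i + (m + 1)) * t ^ (i + (m + 1))|
        ≤ 3 * (8 * t) ^ (m + 1) * (8 * t) ^ i := by
      intro i
      rw [abs_mul, abs_pow, _root_.abs_of_nonneg h0.le]
      calc |d (i + (m + 1))| * t ^ (i + (m + 1))
          ≤ (3 * 8 ^ (i + (m + 1))) * t ^ (i + (m + 1)) :=
            mul_le_mul_of_nonneg_right (hdb _) (by positivity)
        _ = 3 * (8 * t) ^ (m + 1) * (8 * t) ^ i := by
            rw [mul_pow, mul_pow, pow_add, pow_add]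
            ring
    have hmajsum : Summable fun i : ℕ => 3 * (8 * t) ^ (m + 1) * (8 * t) ^ i :=
      (summable_geometric_of_lt_one h8t.le (by linarith)).mul_left _
    have habs_sum : Summable fun i : ℕ => |d (i + (m + 1)) * t ^ (i + (m + 1))| :=
      Summable.of_nonneg_of_le (fun i => abs_nonneg _) hmaj hmajsum
    have hbound : |∑' i, d (i + (m + 1)) * t ^ (i + (m + 1))|
        ≤ 3 * (8 * t) ^ (m + 1) * (1 - 8 * t)⁻¹ := by
      calc |∑' i, d (i + (m + 1)) * t ^ (i + (m + 1))|
          ≤ ∑' i, |d (i + (m + 1)) * t ^ (i + (m + 1))| := by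
            simpa only [Real.norm_eq_abs] using
              norm_tsum_le_tsum_norm (f := fun i => d (i + (m + 1)) * t ^ (i + (m + 1)))
                (by simpa only [Real.norm_eq_abs] using habs_sum)
        _ ≤ ∑' i, 3 * (8 * t) ^ (m + 1) * (8 * t) ^ i :=
            Summable.tsum_le_tsum hmaj habs_sum hmajsum
        _ = 3 * (8 * t) ^ (m + 1) * (1 - 8 * t)⁻¹ := by
            rw [tsum_mul_left, tsum_geometric_of_lt_one h8t.le (by linarith)]
    have hinv : (1 - 8 * t)⁻¹ ≤ 2 := by
      rw [inv_le_comm₀ (by linarith) (by norm_num)]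
      linarith
    have h5 : |d m| * t ^ m ≤ 6 * (8 * t) ^ (m + 1) := by
      have h6 : |d m * t ^ m| ≤ 3 * (8 * t) ^ (m + 1) * (1 - 8 * t)⁻¹ := by
        rw [htail, abs_neg]
        exact hbound
      rw [abs_mul, abs_pow, _root_.abs_of_nonneg h0.le] at h6
      calc |d m| * t ^ m ≤ 3 * (8 * t) ^ (m + 1) * (1 - 8 * t)⁻¹ := h6
        _ ≤ 3 * (8 * t) ^ (m + 1) * 2 := by
            apply mul_le_mul_of_nonneg_left hinv (by positivity)
        _ = 6 * (8 * t) ^ (m + 1) := by ring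
    have h7 : (8 * t) ^ (m + 1) = 8 ^ (m + 1) * t ^ m * t := by
      rw [mul_pow, pow_succ]
      ring
    rw [h7] at h5
    have htm : 0 < t ^ m := by positivity
    calc |d m| = |d m| * t ^ m / t ^ m := by field_simp
      _ ≤ 6 * (8 ^ (m + 1) * t ^ m * t) / t ^ m := by
          gcongr
      _ = 6 * 8 ^ (m + 1) * t := by field_simp
  have hdm : d m = 0 := by
    by_contra hne
    have hεpos : 0 < |d m| := abs_pos.mpr hne
    set t : ℝ := min (1/16) (|d m| / (12 * 8 ^ (m + 1))) with ht
    have h8p : (0:ℝ) < 8 ^ (m + 1) := by positivity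
    have ht0 : 0 < t := lt_min (by norm_num) (by positivity)
    have ht1 : t ≤ 1/16 := min_le_left _ _
    have ht2 : t ≤ |d m| / (12 * 8 ^ (m + 1)) := min_le_right _ _
    have := key t ht0 ht1
    have : |d m| ≤ 6 * 8 ^ (m + 1) * (|d m| / (12 * 8 ^ (m + 1))) := by
      calc |d m| ≤ 6 * 8 ^ (m + 1) * t := this
        _ ≤ 6 * 8 ^ (m + 1) * (|d m| / (12 * 8 ^ (m + 1))) :=
            mul_le_mul_of_nonneg_left ht2 (by positivity)
    have heq : 6 * 8 ^ (m + 1) * (|d m| / (12 * 8 ^ (m + 1))) = |d m| / 2 := by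
      field_simp
      ring
    rw [heq] at this
    linarith
  have : (legendre m).eval u - mc u m = 0 := hdm
  linarith

lemma legendre_abs_le {u : ℝ} (hu : |u| ≤ 1) (ℓ : ℕ) : |(legendre ℓ).eval u| ≤ 1 := by
  rw [legendre_eq_mc hu]
  exact mc_abs_le hu ℓ

lemma hasSum_legendre_full {u : ℝ} (hu : |u| ≤ 1) {t : ℝ} (h0 : 0 < t) (h1 : t < 1) :
    HasSum (fun ℓ => (legendre ℓ).eval u * t ^ ℓ)
      ((Real.sqrt (1 - 2 * t * u + t ^ 2))⁻¹) := by
  have h := hasSum_mc hu h0 h1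
  have e : (fun ℓ => (legendre ℓ).eval u * t ^ ℓ) = fun ℓ => mc u ℓ * t ^ ℓ :=
    funext fun ℓ => by rw [legendre_eq_mc hu]
  rw [e]
  exact h

/-- Truncated multipole expansion estimate for the 3D Laplace kernel (used in the
proof of Lemma 1 of the paper). -/
theorem multipole_truncation_bound (x y : EuclideanSpace ℝ (Fin 3))
    (hy : 0 < ‖y‖) (hxy : ‖y‖ < ‖x‖) (p : ℕ) :
    |1 / ‖x - y‖ -
        ∑ ℓ ∈ Finset.range (p + 1), ‖y‖ ^ ℓ / ‖x‖ ^ (ℓ + 1) *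
          (legendre ℓ).eval ((inner ℝ x y : ℝ) / (‖x‖ * ‖y‖))| ≤
      1 / (‖x‖ - ‖y‖) * (‖y‖ / ‖x‖) ^ (p + 1) := by
  have hx : 0 < ‖x‖ := lt_trans hy hxy
  set t : ℝ := ‖y‖ / ‖x‖ with htdef
  set u : ℝ := (inner ℝ x y : ℝ) / (‖x‖ * ‖y‖) with hudef
  have ht0 : 0 < t := div_pos hy hx
  have ht1 : t < 1 := (div_lt_one hx).mpr hxy
  have hu : |u| ≤ 1 := by
    rw [hudef, abs_div]
    rw [div_le_one (by rw [_root_.abs_of_nonneg (by positivity)]; positivity)]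
    rw [_root_.abs_of_nonneg (by positivity : (0:ℝ) ≤ ‖x‖ * ‖y‖)]
    exact abs_real_inner_le_norm x y
  set D : ℝ := 1 - 2 * t * u + t ^ 2 with hDdef
  have hDpos : 0 < D := by
    have := abs_le.mp hu
    rw [hDdef]
    nlinarith
  have hinner : ‖x‖ ^ 2 * (t * u) = (inner ℝ x y : ℝ) := by
    rw [htdef, hudef]
    field_simp
  have hnormD : ‖x - y‖ = ‖x‖ * Real.sqrt D := by
    have h1 : ‖x - y‖ ^ 2 = ‖x‖ ^ 2 * D := by
      rw [norm_sub_sq_real, hDdef]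
      have h2 : ‖x‖ ^ 2 * t ^ 2 = ‖y‖ ^ 2 := by
        rw [htdef]
        field_simp
      nlinarith [hinner]
    calc ‖x - y‖ = Real.sqrt (‖x - y‖ ^ 2) := (Real.sqrt_sq (norm_nonneg _)).symm
      _ = Real.sqrt (‖x‖ ^ 2 * D) := by rw [h1]
      _ = ‖x‖ * Real.sqrt D := by
          rw [Real.sqrt_mul (by positivity), Real.sqrt_sq hx.le]
  have hs := hasSum_legendre_full hu ht0 ht1
  have hsummable := hs.summable
  have hsplit := Summable.sum_add_tsum_nat_add (p + 1) hsummable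
  rw [hs.tsum_eq] at hsplit
  have hLHS : 1 / ‖x - y‖ -
      ∑ ℓ ∈ Finset.range (p + 1), ‖y‖ ^ ℓ / ‖x‖ ^ (ℓ + 1) * (legendre ℓ).eval u
      = (∑' i, (legendre (i + (p + 1))).eval u * t ^ (i + (p + 1))) / ‖x‖ := by
    have hpart : ∑ ℓ ∈ Finset.range (p + 1), ‖y‖ ^ ℓ / ‖x‖ ^ (ℓ + 1) * (legendre ℓ).eval u
        = (∑ ℓ ∈ Finset.range (p + 1), (legendre ℓ).eval u * t ^ ℓ) / ‖x‖ := by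
      rw [Finset.sum_div]
      apply Finset.sum_congr rfl
      intro ℓ _
      rw [htdef, div_pow, pow_succ]
      field_simp
    rw [hpart, hnormD]
    rw [← hDdef] at hsplit
    have h9 : ∑ ℓ ∈ Finset.range (p + 1), (legendre ℓ).eval u * t ^ ℓ
        = (Real.sqrt D)⁻¹ - ∑' i, (legendre (i + (p + 1))).eval u * t ^ (i + (p + 1)) := by
      linarith [hsplit]
    rw [h9]
    have hsD : Real.sqrt D ≠ 0 := by positivity
    have hxne : ‖x‖ ≠ 0 := by positivity
    field_simp
    ring
  rw [hLHS]
  set T : ℝ := ∑' i, (legendre (i + (p + 1))).eval u * t ^ (i + (p + 1)) with hT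
  have hmaj : ∀ i : ℕ, |(legendre (i + (p + 1))).eval u * t ^ (i + (p + 1))|
      ≤ t ^ (p + 1) * t ^ i := by
    intro i
    rw [abs_mul, abs_pow, _root_.abs_of_nonneg ht0.le]
    calc |(legendre (i + (p + 1))).eval u| * t ^ (i + (p + 1))
        ≤ 1 * t ^ (i + (p + 1)) :=
          mul_le_mul_of_nonneg_right (legendre_abs_le hu _) (by positivity)
      _ = t ^ (p + 1) * t ^ i := by rw [one_mul, pow_add]; ring
  have hmajsum : Summable fun i : ℕ => t ^ (p + 1) * t ^ i :=
    (summable_geometric_of_lt_one ht0.le ht1).mul_left _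
  have habzsum : Summable fun i : ℕ => |(legendre (i + (p + 1))).eval u * t ^ (i + (p + 1))| := by
    apply Summable.of_nonneg_of_le (fun i => abs_nonneg _) hmaj hmajsum
  have hTbound : |T| ≤ t ^ (p + 1) * (1 - t)⁻¹ := by
    calc |T| ≤ ∑' i, |(legendre (i + (p + 1))).eval u * t ^ (i + (p + 1))| := by
          rw [hT]
          simpa only [Real.norm_eq_abs] using
            norm_tsum_le_tsum_norm
              (f := fun i => (legendre (i + (p + 1))).eval u * t ^ (i + (p + 1)))
              (by simpa only [Real.norm_eq_abs] using habzsum)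
      _ ≤ ∑' i, t ^ (p + 1) * t ^ i := Summable.tsum_le_tsum hmaj habzsum hmajsum
      _ = t ^ (p + 1) * (1 - t)⁻¹ := by
          rw [tsum_mul_left, tsum_geometric_of_lt_one ht0.le ht1]
  have hfinal : |T| / ‖x‖ ≤ 1 / (‖x‖ - ‖y‖) * t ^ (p + 1) := by
    have hxt : ‖x‖ - ‖y‖ = ‖x‖ * (1 - t) := by
      rw [htdef]
      field_simp
    have h1t : 0 < 1 - t := by linarith
    calc |T| / ‖x‖ ≤ (t ^ (p + 1) * (1 - t)⁻¹) / ‖x‖ := by gcongr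
      _ = 1 / (‖x‖ - ‖y‖) * t ^ (p + 1) := by
          rw [hxt]
          field_simp
  calc |T / ‖x‖| = |T| / ‖x‖ := by
        rw [abs_div, _root_.abs_of_nonneg hx.le]
    _ ≤ 1 / (‖x‖ - ‖y‖) * t ^ (p + 1) := hfinal
end
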